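/- For every real constant c > 0, the function f(x) = x · (2^(c/x) − 1) is strictly convex on the open interval (0, ∞). -/

import Mathlib

/-- The per-user power function `f(x) = x·(2^(c/x) − 1)` is strictly convex on `(0, ∞)`. -/
theorem strictConvexOn_power_per_prb (c : ℝ) (hc : 0 < c) :
    StrictConvexOn ℝ (Set.Ioi (0 : ℝ))
      (fun x : ℝ => x * ((2 : ℝ) ^ (c / x) - 1)) := by
  have hlog : 0 < Real.log 2 := Real.log_pos (by norm_num)
  set a : ℝ := Real.log 2 * c with ha
  have ha0 : 0 < a := mul_pos hlog hc
  have hfe : (fun x : ℝ => x * ((2 : ℝ) ^ (c / x) - 1)) =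
      fun x : ℝ => x * (Real.exp (a * x⁻¹) - 1) := by
    funext x
    rw [Real.rpow_def_of_pos (by norm_num : (0:ℝ) < 2)]
    rw [div_eq_mul_inv, ha]
    ring_nf
  rw [hfe]
  set g : ℝ → ℝ := fun x : ℝ => x * (Real.exp (a * x⁻¹) - 1) with hg
  set D1 : ℝ → ℝ := fun x : ℝ => (1 - a * x⁻¹) * Real.exp (a * x⁻¹) - 1 with hD1
  have key : ∀ x ∈ Set.Ioi (0:ℝ), HasDerivAt g (D1 x) x := by
    intro x hx
    have hx0 : x ≠ 0 := ne_of_gt hx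
    have h1 : HasDerivAt (fun x : ℝ => a * x⁻¹) (a * (-(x^2)⁻¹)) x :=
      (hasDerivAt_inv hx0).const_mul a
    have h3 : HasDerivAt g
        (1 * (Real.exp (a * x⁻¹) - 1) + x * (Real.exp (a * x⁻¹) * (a * -(x ^ 2)⁻¹))) x :=
      (hasDerivAt_id x).fun_mul (h1.exp.sub_const 1)
    convert h3 using 1
    simp only [hD1]
    field_simp
    ring
  have key2 : ∀ x ∈ Set.Ioi (0:ℝ), HasDerivAt D1 (a^2 * (x^3)⁻¹ * Real.exp (a * x⁻¹)) x := by
    intro x hx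
    have hx0 : x ≠ 0 := ne_of_gt hx
    have h1 : HasDerivAt (fun x : ℝ => a * x⁻¹) (a * (-(x^2)⁻¹)) x :=
      (hasDerivAt_inv hx0).const_mul a
    have h2 : HasDerivAt (fun x : ℝ => 1 - a * x⁻¹) (-(a * (-(x^2)⁻¹))) x := h1.const_sub 1
    have h4 : HasDerivAt (fun y : ℝ => (1 - a * y⁻¹) * Real.exp (a * y⁻¹) - 1)
        (-(a * -(x ^ 2)⁻¹) * Real.exp (a * x⁻¹) + (1 - a * x⁻¹) * (Real.exp (a * x⁻¹) * (a * -(x ^ 2)⁻¹))) x :=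
      (h2.fun_mul h1.exp).sub_const 1
    convert h4 using 1
    field_simp
    ring
  apply strictConvexOn_of_deriv2_pos (convex_Ioi 0)
  · exact fun x hx => (key x hx).continuousAt.continuousWithinAt
  · intro x hx
    rw [interior_Ioi] at hx
    have hx0 : (0:ℝ) < x := hx
    have hEq : deriv g =ᶠ[nhds x] D1 := by
      filter_upwards [Ioi_mem_nhds hx0] with y hy using (key y hy).deriv
    have h2d : HasDerivAt (deriv g) (a^2 * (x^3)⁻¹ * Real.exp (a * x⁻¹)) x :=
      (key2 x hx).congr_of_eventuallyEq hEq
    have hiter : deriv^[2] g x = deriv (deriv g) x := rfl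
    rw [hiter, h2d.deriv]
    positivity
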